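/- Let a, b ∈ ℂ with positive real parts and x ∈ ℝ. Then the continuous Hahn polynomial admits the representation p_n(x; a, b, ā, b̄) = iⁿ Σ_{k=0}^n (−1)^k (a+ix)_k (b+ix)_k (ā−ix)_{n−k} (b̄−ix)_{n−k} / (k! (n−k)!). -/

import Mathlib

open Complex Finset

/-- The Pochhammer symbol (rising factorial) `(z)_n = z(z+1)⋯(z+n-1)`. -/
noncomputable def poch (z : ℂ) (n : ℕ) : ℂ := ∏ i ∈ Finset.range n, (z + i)

/-- The continuous Hahn polynomial `p_n(x; a, b, ā, b̄)` via its terminating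
`₃F₂` representation. -/
noncomputable def cHahn (n : ℕ) (x : ℝ) (a b : ℂ) : ℂ :=
  Complex.I ^ n * poch ((2 * a.re : ℝ) : ℂ) n * poch (a + (starRingEnd ℂ) b) n /
      (n.factorial : ℂ) *
    ∑ j ∈ Finset.range (n + 1),
      poch (-(n : ℂ)) j * poch ((n : ℂ) + 2 * a.re + 2 * b.re - 1) j *
          poch (a + Complex.I * x) j /
        (poch ((2 * a.re : ℝ) : ℂ) j * poch (a + (starRingEnd ℂ) b) j * j.factorial)

lemma poch_zero (z : ℂ) : poch z 0 = 1 := by simp [poch]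

lemma poch_succ (z : ℂ) (n : ℕ) : poch z (n + 1) = poch z n * (z + n) := by
  simp [poch, Finset.prod_range_succ]

lemma poch_add (z : ℂ) (m k : ℕ) : poch z (m + k) = poch z m * poch (z + m) k := by
  unfold poch
  rw [Finset.prod_range_add]
  congr 1
  refine Finset.prod_congr rfl fun i _ => ?_
  push_cast; ring

lemma poch_reflect (z : ℂ) (m : ℕ) : poch z m = (-1) ^ m * poch (1 - m - z) m := by
  have key : poch (1 - m - z) m = (-1) ^ m * poch z m := by
    unfold poch
    have h1 : ∀ i ∈ Finset.range m, (1 - (m : ℂ) - z) + i = -(z + ((m - 1 - i : ℕ) : ℂ)) := by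
      intro i hi
      simp only [Finset.mem_range] at hi
      have h2 : ((m - 1 - i : ℕ) : ℂ) = (m : ℂ) - 1 - i := by
        have h3 : (m - 1 - i) + (i + 1) = m := by omega
        have h4 := congrArg (fun t : ℕ => (t : ℂ)) h3
        push_cast at h4
        linear_combination h4
      rw [h2]; ring
    rw [Finset.prod_congr rfl h1]
    have h5 : ∀ i ∈ Finset.range m, -(z + ((m - 1 - i : ℕ) : ℂ)) =
        (-1) * (z + ((m - 1 - i : ℕ) : ℂ)) := fun i _ => by ring
    rw [Finset.prod_congr rfl h5, Finset.prod_mul_distrib, Finset.prod_const,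
      Finset.card_range, Finset.prod_range_reflect (fun i => z + (i : ℂ)) m]
  rw [key, ← mul_assoc, ← mul_pow]
  simp

lemma poch_ne_zero_of_re_pos {z : ℂ} (hz : 0 < z.re) (j : ℕ) : poch z j ≠ 0 := by
  refine Finset.prod_ne_zero_iff.mpr fun i _ h => ?_
  have : (z + (i : ℂ)).re = 0 := by rw [h]; simp
  simp only [Complex.add_re, Complex.natCast_re] at this
  have hi : (0 : ℝ) ≤ i := Nat.cast_nonneg i
  linarith

lemma cast_sub_of_le {n m : ℕ} (h : m ≤ n) : ((n - m : ℕ) : ℂ) = (n : ℂ) - m := by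
  have := congrArg (fun t : ℕ => (t : ℂ)) (Nat.sub_add_cancel h)
  push_cast at this
  linear_combination this

lemma neg_one_pow_sub {n m : ℕ} (h : m ≤ n) : ((-1 : ℂ)) ^ (n - m) = (-1) ^ n * (-1) ^ m := by
  rw [← pow_add]
  have h2 : n + m = (n - m) + 2 * m := by omega
  rw [h2, pow_add, pow_mul]
  norm_num

lemma neg_one_pow_split {n m : ℕ} (h : m ≤ n) : ((-1 : ℂ)) ^ n = (-1) ^ m * (-1) ^ (n - m) := by
  rw [← pow_add]
  congr 1
  omega

lemma poch_vandermonde (X Y : ℂ) (n : ℕ) : poch (X + Y) n =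
    ∑ k ∈ Finset.range (n + 1), (n.choose k : ℂ) * (poch X k * poch Y (n - k)) := by
  induction n with
  | zero => simp [poch]
  | succ n ih =>
    have hT : ∑ k ∈ Finset.range (n + 2), (n.choose k : ℂ) * (poch X k * poch Y (n + 1 - k))
        = (∑ k ∈ Finset.range (n + 1),
            (n.choose (k + 1) : ℂ) * (poch X (k + 1) * poch Y (n - k)))
          + poch Y (n + 1) := by
      rw [Finset.sum_range_succ' (fun k => (n.choose k : ℂ) * (poch X k * poch Y (n + 1 - k)))]
      simp [poch_zero]
    have hT2 : ∑ k ∈ Finset.range (n + 2), (n.choose k : ℂ) * (poch X k * poch Y (n + 1 - k))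
        = ∑ k ∈ Finset.range (n + 1), (n.choose k : ℂ) * (poch X k * poch Y (n + 1 - k)) := by
      rw [Finset.sum_range_succ]
      simp [Nat.choose_succ_self]
    have hmain : ∑ k ∈ Finset.range (n + 2),
        ((n + 1).choose k : ℂ) * (poch X k * poch Y (n + 1 - k))
        = (∑ k ∈ Finset.range (n + 1),
            (n.choose (k + 1) : ℂ) * (poch X (k + 1) * poch Y (n - k)))
          + poch Y (n + 1)
          + ∑ k ∈ Finset.range (n + 1), (n.choose k : ℂ) * (poch X (k + 1) * poch Y (n - k)) := by
      rw [Finset.sum_range_succ' (fun k => ((n + 1).choose k : ℂ) * (poch X k * poch Y (n + 1 - k)))]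
      have : ∀ k ∈ Finset.range (n + 1),
          ((n + 1).choose (k + 1) : ℂ) * (poch X (k + 1) * poch Y (n + 1 - (k + 1)))
          = (n.choose (k + 1) : ℂ) * (poch X (k + 1) * poch Y (n - k))
            + (n.choose k : ℂ) * (poch X (k + 1) * poch Y (n - k)) := by
        intro k hk
        have h1 : (n + 1).choose (k + 1) = n.choose k + n.choose (k + 1) := Nat.choose_succ_succ n k
        have h2 : n + 1 - (k + 1) = n - k := by omega
        rw [h1, h2]; push_cast; ring
      have hcong : (∑ k ∈ Finset.range (n + 1),
          ((n + 1).choose (k + 1) : ℂ) * (poch X (k + 1) * poch Y (n + 1 - (k + 1))))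
          = ∑ k ∈ Finset.range (n + 1),
            ((n.choose (k + 1) : ℂ) * (poch X (k + 1) * poch Y (n - k))
              + (n.choose k : ℂ) * (poch X (k + 1) * poch Y (n - k))) :=
        Finset.sum_congr rfl this
      rw [hcong, Finset.sum_add_distrib, poch_zero]
      simp only [Nat.choose_zero_right, Nat.cast_one, one_mul, Nat.sub_zero]
      ring
    rw [poch_succ, ih, hmain, ← hT, hT2, Finset.sum_mul, ← Finset.sum_add_distrib]
    refine Finset.sum_congr rfl fun k hk => ?_
    simp only [Finset.mem_range] at hk
    have hk' : k ≤ n := by omega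
    have h3 : n + 1 - k = (n - k) + 1 := by omega
    have h4 : ((n - k : ℕ) : ℂ) = (n : ℂ) - k := cast_sub_of_le hk'
    rw [h3, poch_succ, poch_succ, h4]
    ring

lemma poch_cv (B C : ℂ) (J : ℕ) :
    ∑ l ∈ Finset.range (J + 1),
      (-1 : ℂ) ^ l * (J.choose l : ℂ) * (poch B l * poch (C + l) (J - l))
      = poch (C - B) J := by
  have h : ∀ l ∈ Finset.range (J + 1),
      (-1 : ℂ) ^ l * (J.choose l : ℂ) * (poch B l * poch (C + l) (J - l))
      = (-1) ^ J * ((J.choose l : ℂ) * (poch B l * poch (1 - J - C) (J - l))) := by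
    intro l hl
    simp only [Finset.mem_range] at hl
    have hl' : l ≤ J := by omega
    have h4 : ((J - l : ℕ) : ℂ) = (J : ℂ) - l := cast_sub_of_le hl'
    rw [poch_reflect (C + l) (J - l), h4]
    have harg : 1 - ((J : ℂ) - l) - (C + l) = 1 - J - C := by ring
    rw [harg]
    have hsgn : (-1 : ℂ) ^ (J - l) * (-1) ^ l = (-1) ^ J := by
      rw [← pow_add]
      congr 1
      omega
    calc (-1 : ℂ) ^ l * (J.choose l : ℂ) * (poch B l * ((-1) ^ (J - l) * poch (1 - J - C) (J - l)))
        = ((-1 : ℂ) ^ (J - l) * (-1) ^ l) * ((J.choose l : ℂ) * (poch B l * poch (1 - J - C) (J - l))) := by ring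
      _ = _ := by rw [hsgn]
  rw [Finset.sum_congr rfl h, ← Finset.mul_sum, ← poch_vandermonde]
  rw [poch_reflect (C - B) J]
  congr 2
  ring

lemma poch_neg_nat (n j : ℕ) (h : j ≤ n) :
    poch (-(n : ℂ)) j = (-1) ^ j * (n.choose j : ℂ) * (j.factorial : ℂ) := by
  induction j with
  | zero => simp [poch_zero]
  | succ j ih =>
    have hj : j ≤ n := by omega
    rw [poch_succ, ih hj]
    have h4 : ((n - j : ℕ) : ℂ) = (n : ℂ) - j := cast_sub_of_le hj
    have key : (n.choose j : ℂ) * ((n - j : ℕ) : ℂ) = (n.choose (j + 1) : ℂ) * ((j + 1 : ℕ) : ℂ) := by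
      have := congrArg (fun t : ℕ => (t : ℂ)) (Nat.choose_succ_right_eq n j)
      push_cast at this ⊢
      linear_combination this.symm
    have hfac : ((j + 1).factorial : ℂ) = ((j + 1 : ℕ) : ℂ) * (j.factorial : ℂ) := by
      rw [Nat.factorial_succ]; push_cast; ring
    calc (-1 : ℂ) ^ j * (n.choose j : ℂ) * (j.factorial : ℂ) * (-(n : ℂ) + j)
        = (-1 : ℂ) ^ (j + 1) * ((n.choose j : ℂ) * ((n : ℂ) - j)) * (j.factorial : ℂ) := by ring
      _ = (-1 : ℂ) ^ (j + 1) * ((n.choose (j + 1) : ℂ) * ((j + 1 : ℕ) : ℂ)) * (j.factorial : ℂ) := by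
          rw [← h4, key]
      _ = (-1) ^ (j + 1) * (n.choose (j + 1) : ℂ) * ((j + 1).factorial : ℂ) := by
          rw [hfac]; push_cast; ring

lemma lemmaL (n : ℕ) (u c v w : ℂ) :
    (∑ j ∈ Finset.range (n + 1), (-1 : ℂ) ^ j * (n.choose j : ℂ) * poch u j * poch c j *
      poch (v + j) (n - j) * poch (w + j) (n - j))
    = ∑ m ∈ Finset.range (n + 1), (n.choose m : ℂ) * poch u m * poch (v - c) m *
        poch (w - u) (n - m) * poch (v + m) (n - m) := by
  have hc : ∀ j : ℕ, poch c j = ∑ m ∈ Finset.range (j + 1),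
      (-1 : ℂ) ^ m * (j.choose m : ℂ) * (poch (v - c) m * poch (v + m) (j - m)) := by
    intro j
    have h := poch_cv (v - c) v j
    rw [sub_sub_cancel] at h
    exact h.symm
  set G : ℕ → ℕ → ℂ := fun j m =>
    (-1 : ℂ) ^ j * (n.choose j : ℂ) * poch u j *
        ((-1 : ℂ) ^ m * (j.choose m : ℂ) * (poch (v - c) m * poch (v + m) (j - m))) *
      poch (v + j) (n - j) * poch (w + j) (n - j) with hG
  have step1 : (∑ j ∈ Finset.range (n + 1), (-1 : ℂ) ^ j * (n.choose j : ℂ) * poch u j *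
      poch c j * poch (v + j) (n - j) * poch (w + j) (n - j))
      = ∑ j ∈ Finset.range (n + 1), ∑ m ∈ Finset.range (j + 1), G j m := by
    refine Finset.sum_congr rfl fun j _ => ?_
    rw [hc j, Finset.mul_sum, Finset.sum_mul, Finset.sum_mul]
  have hswap : (∑ j ∈ Finset.Ico 0 (n + 1), ∑ m ∈ Finset.Ico 0 (j + 1), G j m)
      = ∑ m ∈ Finset.Ico 0 (n + 1), ∑ j ∈ Finset.Ico m (n + 1), G j m :=
    (Finset.sum_Ico_Ico_comm 0 (n + 1) fun m j => G j m).symm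
  rw [step1]
  simp only [Finset.range_eq_Ico] at hswap ⊢
  rw [hswap]
  refine Finset.sum_congr rfl fun m hm => ?_
  simp only [Finset.mem_Ico] at hm
  have hmn : m ≤ n := by omega
  rw [Finset.sum_Ico_eq_sum_range]
  have hrange : n + 1 - m = (n - m) + 1 := by omega
  rw [hrange]
  have hterm : ∀ l ∈ Finset.range ((n - m) + 1), G (m + l) m
      = ((n.choose m : ℂ) * poch u m * poch (v - c) m * poch (v + m) (n - m)) *
        ((-1 : ℂ) ^ l * ((n - m).choose l : ℂ) *
          (poch (u + m) l * poch ((w + m) + l) ((n - m) - l))) := by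
    intro l hl
    simp only [Finset.mem_range] at hl
    have hl' : l ≤ n - m := by omega
    have hml : m + l ≤ n := by omega
    have e1 : poch u (m + l) = poch u m * poch (u + m) l := poch_add u m l
    have ecast : ((m + l : ℕ) : ℂ) = (m : ℂ) + l := by push_cast; ring
    have e2 : poch (v + (m + l : ℕ)) (n - (m + l)) = poch ((v + m) + l) ((n - m) - l) := by
      congr 1
      · rw [ecast]; ring
      · omega
    have e3 : poch (w + (m + l : ℕ)) (n - (m + l)) = poch ((w + m) + l) ((n - m) - l) := by
      congr 1
      · rw [ecast]; ring
      · omega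
    have e4 : m + l - m = l := by omega
    have e5 : poch (v + m) (n - m) = poch (v + m) l * poch ((v + m) + l) ((n - m) - l) := by
      have h2 : n - m = l + ((n - m) - l) := by omega
      calc poch (v + m) (n - m) = poch (v + m) (l + ((n - m) - l)) := by rw [← h2]
        _ = poch (v + m) l * poch ((v + m) + l) ((n - m) - l) := poch_add _ l _
    have e6 : ((n.choose (m + l) : ℕ) : ℂ) * ((m + l).choose m : ℂ)
        = (n.choose m : ℂ) * ((n - m).choose l : ℂ) := by
      have h := (Nat.choose_mul (Nat.le_add_right m l) :
        n.choose (m + l) * (m + l).choose m = _)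
      rw [Nat.add_sub_cancel_left] at h
      exact_mod_cast congrArg (fun t : ℕ => (t : ℂ)) h
    have e7 : (-1 : ℂ) ^ (m + l) * (-1 : ℂ) ^ m = (-1 : ℂ) ^ l := by
      rw [← pow_add]
      have h3 : m + l + m = 2 * m + l := by omega
      rw [h3, pow_add, pow_mul]
      norm_num
    rw [hG]
    simp only
    rw [e1, e2, e3, e4, e5]
    calc (-1 : ℂ) ^ (m + l) * (n.choose (m + l) : ℂ) * (poch u m * poch (u + m) l) *
          ((-1 : ℂ) ^ m * ((m + l).choose m : ℂ) * (poch (v - c) m * poch (v + m) l)) *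
          poch ((v + m) + l) ((n - m) - l) * poch ((w + m) + l) ((n - m) - l)
        = ((-1 : ℂ) ^ (m + l) * (-1 : ℂ) ^ m) * ((n.choose (m + l) : ℂ) * ((m + l).choose m : ℂ)) *
            (poch u m * poch (u + m) l * poch (v - c) m * poch (v + m) l *
              poch ((v + m) + l) ((n - m) - l) * poch ((w + m) + l) ((n - m) - l)) := by ring
      _ = (-1 : ℂ) ^ l * ((n.choose m : ℂ) * ((n - m).choose l : ℂ)) *
            (poch u m * poch (u + m) l * poch (v - c) m * poch (v + m) l *
              poch ((v + m) + l) ((n - m) - l) * poch ((w + m) + l) ((n - m) - l)) := by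
          rw [e6, e7]
      _ = _ := by ring
  rw [Finset.sum_congr rfl hterm, ← Finset.mul_sum, poch_cv (u + m) (w + m) (n - m),
    add_sub_add_right_eq_sub]
  ring

lemma poch_star (n : ℕ) (α β γ δ : ℂ) :
    (∑ j ∈ Finset.range (n + 1), (-1 : ℂ) ^ j * (n.choose j : ℂ) * poch α j *
        poch ((n : ℂ) + (α + β + γ + δ) - 1) j * poch (α + β + j) (n - j) *
        poch (α + δ + j) (n - j))
    = ∑ k ∈ Finset.range (n + 1), (-1 : ℂ) ^ k * (n.choose k : ℂ) * poch α k * poch γ k *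
        poch β (n - k) * poch δ (n - k) := by
  have h1 := lemmaL n α ((n : ℂ) + (α + β + γ + δ) - 1) (α + β) (α + δ)
  rw [show (α + β) - ((n : ℂ) + (α + β + γ + δ) - 1) = 1 - (n : ℂ) - γ - δ by ring,
      show (α + δ) - α = δ by ring] at h1
  rw [h1]
  have h2 := lemmaL n α (1 - (n : ℂ) - γ - δ) (1 - (n : ℂ) - δ) (α + β)
  rw [show (1 - (n : ℂ) - δ) - (1 - (n : ℂ) - γ - δ) = γ by ring,
      show (α + β) - α = β by ring] at h2
  have step : (∑ m ∈ Finset.range (n + 1), (n.choose m : ℂ) * poch α m *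
        poch (1 - (n : ℂ) - γ - δ) m * poch δ (n - m) * poch (α + β + m) (n - m))
      = (-1 : ℂ) ^ n * ∑ j ∈ Finset.range (n + 1), (-1 : ℂ) ^ j * (n.choose j : ℂ) * poch α j *
          poch (1 - (n : ℂ) - γ - δ) j * poch (1 - (n : ℂ) - δ + j) (n - j) *
          poch (α + β + j) (n - j) := by
    rw [Finset.mul_sum]
    refine Finset.sum_congr rfl fun m hm => ?_
    simp only [Finset.mem_range] at hm
    have hmn : m ≤ n := by omega
    have hrefl : poch δ (n - m) = (-1 : ℂ) ^ (n - m) * poch (1 - (n : ℂ) - δ + m) (n - m) := by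
      rw [poch_reflect δ (n - m), cast_sub_of_le hmn,
        show 1 - ((n : ℂ) - m) - δ = 1 - (n : ℂ) - δ + m by ring]
    rw [hrefl, neg_one_pow_sub hmn]
    ring
  rw [step, h2, Finset.mul_sum]
  refine Finset.sum_congr rfl fun k hk => ?_
  simp only [Finset.mem_range] at hk
  have hkn : k ≤ n := by omega
  have hrefl : poch δ (n - k) = (-1 : ℂ) ^ (n - k) * poch (1 - (n : ℂ) - δ + k) (n - k) := by
    rw [poch_reflect δ (n - k), cast_sub_of_le hkn,
      show 1 - ((n : ℂ) - k) - δ = 1 - (n : ℂ) - δ + k by ring]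
  rw [hrefl, neg_one_pow_split hkn]
  ring

lemma main_general (n : ℕ) (α β γ δ : ℂ) (h1 : 0 < (α + β).re) (h2 : 0 < (α + δ).re) :
    poch (α + β) n * poch (α + δ) n / (n.factorial : ℂ) *
      ∑ j ∈ Finset.range (n + 1),
        poch (-(n : ℂ)) j * poch ((n : ℂ) + (α + β + γ + δ) - 1) j * poch α j /
          (poch (α + β) j * poch (α + δ) j * (j.factorial : ℂ))
    = ∑ k ∈ Finset.range (n + 1),
        (-1 : ℂ) ^ k * poch α k * poch γ k * poch β (n - k) * poch δ (n - k) /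
          ((k.factorial : ℂ) * ((n - k).factorial : ℂ)) := by
  have hfn : ((n.factorial : ℕ) : ℂ) ≠ 0 := Nat.cast_ne_zero.mpr (Nat.factorial_ne_zero n)
  rw [Finset.mul_sum]
  have hterm : ∀ j ∈ Finset.range (n + 1),
      poch (α + β) n * poch (α + δ) n / (n.factorial : ℂ) *
        (poch (-(n : ℂ)) j * poch ((n : ℂ) + (α + β + γ + δ) - 1) j * poch α j /
          (poch (α + β) j * poch (α + δ) j * (j.factorial : ℂ)))
      = ((-1 : ℂ) ^ j * (n.choose j : ℂ) * poch α j * poch ((n : ℂ) + (α + β + γ + δ) - 1) j *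
          poch (α + β + j) (n - j) * poch (α + δ + j) (n - j)) / (n.factorial : ℂ) := by
    intro j hj
    simp only [Finset.mem_range] at hj
    have hjn : j ≤ n := by omega
    have e1 : poch (α + β) n = poch (α + β) j * poch (α + β + j) (n - j) := by
      conv_lhs => rw [show n = j + (n - j) by omega]
      exact poch_add _ j (n - j)
    have e2 : poch (α + δ) n = poch (α + δ) j * poch (α + δ + j) (n - j) := by
      conv_lhs => rw [show n = j + (n - j) by omega]
      exact poch_add _ j (n - j)
    have e3 : poch (-(n : ℂ)) j = (-1) ^ j * (n.choose j : ℂ) * (j.factorial : ℂ) :=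
      poch_neg_nat n j hjn
    have hb1 : poch (α + β) j ≠ 0 := poch_ne_zero_of_re_pos h1 j
    have hb2 : poch (α + δ) j ≠ 0 := poch_ne_zero_of_re_pos h2 j
    have hfj : ((j.factorial : ℕ) : ℂ) ≠ 0 := Nat.cast_ne_zero.mpr (Nat.factorial_ne_zero j)
    rw [e1, e2, e3]
    field_simp
  rw [Finset.sum_congr rfl hterm, ← Finset.sum_div, poch_star n α β γ δ, Finset.sum_div]
  refine Finset.sum_congr rfl fun k hk => ?_
  simp only [Finset.mem_range] at hk
  have hkn : k ≤ n := by omega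
  have hnf : ((n.factorial : ℕ) : ℂ)
      = (n.choose k : ℂ) * (k.factorial : ℂ) * ((n - k).factorial : ℂ) := by
    exact_mod_cast congrArg (fun t : ℕ => (t : ℂ))
      (Nat.choose_mul_factorial_mul_factorial hkn).symm
  have hch : (n.choose k : ℂ) ≠ 0 := Nat.cast_ne_zero.mpr (Nat.choose_pos hkn).ne'
  have hfk : ((k.factorial : ℕ) : ℂ) ≠ 0 := Nat.cast_ne_zero.mpr (Nat.factorial_ne_zero k)
  have hfnk : (((n - k).factorial : ℕ) : ℂ) ≠ 0 :=
    Nat.cast_ne_zero.mpr (Nat.factorial_ne_zero (n - k))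
  rw [hnf]
  field_simp

theorem cHahn_representation (a b : ℂ) (ha : 0 < a.re) (hb : 0 < b.re) (x : ℝ) (n : ℕ) :
    cHahn n x a b =
      Complex.I ^ n *
        ∑ k ∈ Finset.range (n + 1),
          (-1 : ℂ) ^ k * poch (a + Complex.I * x) k * poch (b + Complex.I * x) k *
              poch ((starRingEnd ℂ) a - Complex.I * x) (n - k) *
              poch ((starRingEnd ℂ) b - Complex.I * x) (n - k) /
            ((k.factorial : ℂ) * ((n - k).factorial : ℂ)) := by
  unfold cHahn
  have E1 : ((2 * a.re : ℝ) : ℂ)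
      = (a + Complex.I * x) + ((starRingEnd ℂ) a - Complex.I * x) := by
    rw [← Complex.add_conj]
    ring
  have E2 : a + (starRingEnd ℂ) b
      = (a + Complex.I * x) + ((starRingEnd ℂ) b - Complex.I * x) := by ring
  have E3 : (n : ℂ) + 2 * a.re + 2 * b.re - 1
      = (n : ℂ) + ((a + Complex.I * x) + ((starRingEnd ℂ) a - Complex.I * x)
          + (b + Complex.I * x) + ((starRingEnd ℂ) b - Complex.I * x)) - 1 := by
    have ha' : a + (starRingEnd ℂ) a = ((2 * a.re : ℝ) : ℂ) := Complex.add_conj a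
    have hb' : b + (starRingEnd ℂ) b = ((2 * b.re : ℝ) : ℂ) := Complex.add_conj b
    push_cast at ha' hb'
    linear_combination - ha' - hb'
  rw [E1, E2, E3]
  have hre1 : 0 < ((a + Complex.I * x) + ((starRingEnd ℂ) a - Complex.I * x)).re := by
    rw [← E1]
    simpa using ha
  have hre2 : 0 < ((a + Complex.I * x) + ((starRingEnd ℂ) b - Complex.I * x)).re := by
    rw [← E2]
    simp only [Complex.add_re, Complex.conj_re]
    linarith
  have key := main_general n (a + Complex.I * x) ((starRingEnd ℂ) a - Complex.I * x)
    (b + Complex.I * x) ((starRingEnd ℂ) b - Complex.I * x) hre1 hre2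
  linear_combination Complex.I ^ n * key
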